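/- arXiv:2507.17631 — 4 statements merged into one kernel-verified Lean document; each statement's English description precedes it below -/
import Mathlib

section
/- Let N be a finite 𝔖-module annihilated both by f = u^r + p·x (with x ∈ 𝔖 a unit, r ≥ 1) and by an Eisenstein polynomial E of degree e. If e ≠ r, then N is killed by p. -/
/-- Let `k` be a perfect field of characteristic `p`, `W = W(k)`,
`𝔖 = W[[u]]`, and `E ∈ W[u]` an Eisenstein polynomial of degree `e`. Let `N` be a finite
`𝔖`-module annihilated both by `f = u^r + p·x` (with `x ∈ 𝔖ˣ` a unit, `r ≥ 1`) and by `E`.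
If `e ≠ r`, then `N` is killed by `p`. -/
theorem stmt_6 {p : ℕ} [Fact p.Prime] {k : Type*} [Field k] [CharP k p] [PerfectField k]
    (E : Polynomial (WittVector p k)) (e : ℕ) (hE : E.Monic) (hdeg : E.natDegree = e)
    (hco : ∀ i < e, (p : WittVector p k) ∣ E.coeff i)
    (hconst : ∃ v : (WittVector p k)ˣ, E.coeff 0 = (p : WittVector p k) * v)
    (N : Type*) [AddCommGroup N] [Module (PowerSeries (WittVector p k)) N]
    [Module.Finite (PowerSeries (WittVector p k)) N]
    (r : ℕ) (hr : 1 ≤ r) (x : (PowerSeries (WittVector p k))ˣ)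
    (hf : ∀ n : N, (PowerSeries.X ^ r +
      (p : PowerSeries (WittVector p k)) * (x : PowerSeries (WittVector p k))) • n = 0)
    (hEkill : ∀ n : N, (E : PowerSeries (WittVector p k)) • n = 0)
    (her : e ≠ r) :
    ∀ n : N, (p : PowerSeries (WittVector p k)) • n = 0 := by
  set W := WittVector p k
  set A := PowerSeries W
  intro n
  by_cases hp0 : (p : W) = 0
  · have hpa : (p : A) = 0 := by
      rw [← map_natCast (PowerSeries.C (R := W)) p, hp0, map_zero]
    rw [hpa, zero_smul]
  -- Write E = X^e + p * G
  obtain ⟨G, hG⟩ : (Polynomial.C (p : W)) ∣ (E - Polynomial.X ^ e) := by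
    rw [Polynomial.C_dvd_iff_dvd_coeff]
    intro i
    rcases lt_trichotomy i e with h | h | h
    · simpa [Polynomial.coeff_X_pow, h.ne] using hco i h
    · subst h
      simp [Polynomial.coeff_X_pow, hdeg ▸ hE.coeff_natDegree]
    · have h1 : E.coeff i = 0 := Polynomial.coeff_eq_zero_of_natDegree_lt (hdeg ▸ h)
      simp [Polynomial.coeff_X_pow, h.ne', h1]
  have hGc : (E : A) = PowerSeries.X ^ e + (p : A) * (G : A) := by
    have h2 := congrArg (fun q : Polynomial W => (q : A)) hG
    simp only [Polynomial.coe_sub, Polynomial.coe_mul, Polynomial.coe_C, Polynomial.coe_pow,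
      Polynomial.coe_X] at h2
    rw [← map_natCast (PowerSeries.C (R := W)) p]
    linear_combination h2
  set f : A := PowerSeries.X ^ r + (p : A) * (x : A) with hfdef
  have hfn : f • n = 0 := hf n
  rcases her.lt_or_gt with hlt | hlt
  · -- e < r : c = X^(r-e)*G - x is a unit, p * c = X^(r-e)*E - f
    set c : A := PowerSeries.X ^ (r - e) * (G : A) - (x : A) with hc
    have hunit : IsUnit c := by
      rw [PowerSeries.isUnit_iff_constantCoeff]
      have h1 : (PowerSeries.constantCoeff (R := W)) (PowerSeries.X ^ (r - e)) = 0 := by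
        rw [map_pow, PowerSeries.constantCoeff_X, zero_pow (by omega)]
      rw [hc, map_sub, map_mul, h1, zero_mul, zero_sub]
      exact (PowerSeries.isUnit_iff_constantCoeff.mp x.isUnit).neg
    have hkey : (p : A) * c = PowerSeries.X ^ (r - e) * (E : A) - f := by
      rw [hGc, hc, hfdef, mul_sub, mul_add, ← mul_assoc, ← pow_add,
        Nat.sub_add_cancel hlt.le]
      ring
    obtain ⟨u, hu⟩ := hunit
    have h0 : ((p : A) * c) • n = 0 := by
      rw [hkey, sub_smul, mul_smul, hEkill, smul_zero, hfn, sub_zero]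
    have hpe : (p : A) = ↑u⁻¹ * ((p : A) * c) := by
      rw [mul_comm (p : A) c, ← mul_assoc, ← hu, u.inv_mul, one_mul]
    rw [hpe, mul_smul, h0, smul_zero]
  · -- r < e : c = G - X^(e-r)*x is a unit, p * c = E - X^(e-r)*f
    set c : A := (G : A) - PowerSeries.X ^ (e - r) * (x : A) with hc
    have hunit : IsUnit c := by
      rw [PowerSeries.isUnit_iff_constantCoeff]
      have h1 : (PowerSeries.constantCoeff (R := W)) (PowerSeries.X ^ (e - r)) = 0 := by
        rw [map_pow, PowerSeries.constantCoeff_X, zero_pow (by omega)]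
      obtain ⟨v, hv⟩ := hconst
      have hGc0 : G.coeff 0 = (v : W) := by
        have h2 := congrArg (fun q : Polynomial W => q.coeff 0) hG
        simp only [Polynomial.coeff_sub, Polynomial.coeff_X_pow, Polynomial.coeff_C_mul] at h2
        rw [if_neg (by omega), sub_zero, hv] at h2
        exact (mul_left_cancel₀ hp0 h2).symm
      have h3 : (PowerSeries.constantCoeff (R := W)) (G : A) = (v : W) := by
        rw [← PowerSeries.coeff_zero_eq_constantCoeff_apply, Polynomial.coeff_coe, hGc0]
      rw [hc, map_sub, map_mul, h1, zero_mul, sub_zero, h3]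
      exact v.isUnit
    have hkey : (p : A) * c = (E : A) - PowerSeries.X ^ (e - r) * f := by
      rw [hGc, hc, hfdef, mul_sub, mul_add, ← mul_assoc, ← pow_add,
        Nat.sub_add_cancel hlt.le]
      ring
    obtain ⟨u, hu⟩ := hunit
    have h0 : ((p : A) * c) • n = 0 := by
      rw [hkey, sub_smul, hEkill, mul_smul, hfn, smul_zero, sub_zero]
    have hpe : (p : A) = ↑u⁻¹ * ((p : A) * c) := by
      rw [mul_comm (p : A) c, ← mul_assoc, ← hu, u.inv_mul, one_mul]
    rw [hpe, mul_smul, h0, smul_zero]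
end

section
/- Let I ⊆ 𝔖 be an ideal and α ≥ 1 the minimal integer such that I + (p) = (p, u^α); assume also I + (u) = (p, u). Then either p ∈ I, or I contains an element of the form u^α + p·x with x a unit of 𝔖. -/
open PowerSeries

/-- If `x ∈ (C c, X^k)` then the coefficients of `x` below degree `k` are divisible by `c`. -/
lemma aux_coeff_dvd {R : Type*} [CommRing R] {c : R} {k : ℕ} {x : PowerSeries R}
    (hx : x ∈ Ideal.span {PowerSeries.C c, PowerSeries.X ^ k}) :
    ∀ n < k, c ∣ PowerSeries.coeff n x := by
  intro n hn
  obtain ⟨a, b, hab⟩ := Ideal.mem_span_pair.mp hx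
  have : PowerSeries.coeff n x =
      PowerSeries.coeff n a * c + PowerSeries.coeff n (b * PowerSeries.X ^ k) := by
    rw [← hab]
    simp [PowerSeries.coeff_mul_C]
  rw [this, PowerSeries.coeff_mul_X_pow', if_neg (by omega)]
  exact ⟨PowerSeries.coeff n a, by ring⟩

/-- Converse decomposition: if coefficients below degree `k` are divisible by `c`,
then the power series lies in `(C c, X^k)` with an explicit decomposition. -/
lemma aux_decomp {R : Type*} [CommRing R] {c : R} {k : ℕ} {t : PowerSeries R}
    (h : ∀ m, m < k → c ∣ PowerSeries.coeff m t) :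
    ∃ τ σ : PowerSeries R,
      t = PowerSeries.C c * τ + PowerSeries.X ^ k * σ := by
  choose d hd using h
  refine ⟨PowerSeries.mk fun m => if hm : m < k then d m hm else 0,
    PowerSeries.mk fun n => PowerSeries.coeff (n + k) t, ?_⟩
  ext n
  rw [map_add, PowerSeries.coeff_C_mul, PowerSeries.coeff_mk,
    PowerSeries.coeff_X_pow_mul']
  by_cases hn : n < k
  · rw [dif_pos hn, if_neg (by omega), ← hd n hn, add_zero]
  · rw [dif_neg hn, if_pos (by omega), PowerSeries.coeff_mk, mul_zero, zero_add,
      Nat.sub_add_cancel (by omega)]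

/-- Let `k` be a perfect field of characteristic `p`, `W = W(k)`,
`𝔖 = W[[u]]`. Let `I ⊆ 𝔖` be an ideal and `α ≥ 1` the minimal integer such that
`I + (p) = (p, u^α)`; assume also `I + (u) = (p, u)`. Then either `p ∈ I`, or `I`
contains an element of the form `u^α + p·x` with `x` a unit of `𝔖`. -/
theorem stmt_7 {p : ℕ} [Fact p.Prime] {k : Type*} [Field k] [CharP k p] [PerfectField k]
    (I : Ideal (PowerSeries (WittVector p k))) (α : ℕ) (hα : 1 ≤ α)
    (hIp : I ⊔ Ideal.span {(p : PowerSeries (WittVector p k))} =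
      Ideal.span {(p : PowerSeries (WittVector p k)), PowerSeries.X ^ α})
    (hmin : ∀ β : ℕ, I ⊔ Ideal.span {(p : PowerSeries (WittVector p k))} =
      Ideal.span {(p : PowerSeries (WittVector p k)), PowerSeries.X ^ β} → α ≤ β)
    (hIu : I ⊔ Ideal.span {(PowerSeries.X : PowerSeries (WittVector p k))} =
      Ideal.span {(p : PowerSeries (WittVector p k)), PowerSeries.X}) :
    (p : PowerSeries (WittVector p k)) ∈ I ∨
      ∃ x : (PowerSeries (WittVector p k))ˣ,
        PowerSeries.X ^ α +
          (p : PowerSeries (WittVector p k)) * (x : PowerSeries (WittVector p k)) ∈ I := by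
  set W := WittVector p k with hW
  set S := PowerSeries W with hS
  haveI : IsDiscreteValuationRing W := WittVector.isDiscreteValuationRing
  -- p ∈ I + (X)
  have hpmem : (p : S) ∈ I ⊔ Ideal.span {(PowerSeries.X : S)} := by
    rw [hIu]
    exact Ideal.subset_span (Set.mem_insert _ _)
  obtain ⟨a, haI, z, hz, hsum⟩ := Submodule.mem_sup.mp hpmem
  obtain ⟨t, ht⟩ := Ideal.mem_span_singleton'.mp hz
  -- X^α ∈ I + (p)
  have hXmem : (PowerSeries.X : S) ^ α ∈ I ⊔ Ideal.span {(p : S)} := by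
    rw [hIp]
    exact Ideal.subset_span (Set.mem_insert_of_mem _ rfl)
  obtain ⟨f, hfI, z', hz', hsum'⟩ := Submodule.mem_sup.mp hXmem
  obtain ⟨g, hg⟩ := Ideal.mem_span_singleton'.mp hz'
  by_cases hgu : IsUnit (-g)
  · right
    refine ⟨hgu.unit, ?_⟩
    have : PowerSeries.X ^ α + (p : S) * (hgu.unit : S) = f := by
      rw [IsUnit.unit_spec]
      have : f + g * (p : S) = PowerSeries.X ^ α := by rw [hg]; exact hsum'
      linear_combination -this
    rw [this]
    exact hfI
  · left
    have hgu' : ¬ IsUnit g := fun h => hgu h.neg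
    -- a ∈ (p, X^α), hence t has low coefficients divisible by p
    have haspan : a ∈ Ideal.span {(p : S), PowerSeries.X ^ α} := by
      rw [← hIp]
      exact Submodule.mem_sup_left haI
    have hCp : (PowerSeries.C (p : W)) = ((p : ℕ) : S) := by
      exact_mod_cast map_natCast (PowerSeries.C (R := W)) p
    have hXt : t * PowerSeries.X ∈
        Ideal.span {PowerSeries.C (p : W), PowerSeries.X ^ α} := by
      rw [hCp]
      have hpspan : (p : S) ∈ Ideal.span {(p : S), PowerSeries.X ^ α} :=
        Ideal.subset_span (Set.mem_insert _ _)
      have : t * PowerSeries.X = (p : S) - a := by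
        rw [← hsum, ht]; ring
      rw [this]
      exact Ideal.sub_mem _ hpspan haspan
    have hdvd : ∀ m, m < α - 1 → ((p : W) ∣ PowerSeries.coeff m t) := by
      intro m hm
      have := aux_coeff_dvd hXt (m + 1) (by omega)
      rwa [PowerSeries.coeff_succ_mul_X] at this
    obtain ⟨τ, σ, htdec⟩ := aux_decomp hdvd
    set v : S := 1 - τ * PowerSeries.X with hv
    have hpow : (PowerSeries.X : S) ^ (α - 1) * PowerSeries.X = PowerSeries.X ^ α := by
      rw [← pow_succ, Nat.sub_add_cancel hα]
    -- a = p * v - X^α * σ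
    have ha_eq : a = (p : S) * v - PowerSeries.X ^ α * σ := by
      have ha' : a = (p : S) - t * PowerSeries.X := by rw [← hsum, ht]; ring
      rw [ha', htdec, hv, hCp]
      linear_combination (-(σ : S)) * hpow
    -- key identity
    have hf : f = PowerSeries.X ^ α - g * (p : S) := by
      rw [← hsum', hg]; ring
    have hkey : f * v + g * a = PowerSeries.X ^ α * (v - g * σ) := by
      rw [hf, ha_eq]; ring
    have hmem : PowerSeries.X ^ α * (v - g * σ) ∈ I := by
      rw [← hkey]
      exact Ideal.add_mem _ (I.mul_mem_right v hfI) (I.mul_mem_left g haI)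
    -- v - g * σ is a unit
    have hunit : IsUnit (v - g * σ) := by
      rw [PowerSeries.isUnit_iff_constantCoeff]
      have hcc : PowerSeries.constantCoeff (v - g * σ) =
          1 - PowerSeries.constantCoeff g * PowerSeries.constantCoeff σ := by
        simp [hv]
      rw [hcc]
      apply IsLocalRing.isUnit_one_sub_self_of_mem_nonunits
      intro hcontra
      exact hgu' (PowerSeries.isUnit_iff_constantCoeff.mpr (isUnit_of_mul_isUnit_left hcontra))
    obtain ⟨w, hw⟩ := hunit
    have hXαI : (PowerSeries.X : S) ^ α ∈ I := by
      have := I.mul_mem_right (↑w⁻¹ : S) hmem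
      have heq : PowerSeries.X ^ α * (v - g * σ) * (↑w⁻¹ : S) = PowerSeries.X ^ α := by
        rw [← hw, mul_assoc, Units.mul_inv, mul_one]
      rwa [heq] at this
    -- p * v ∈ I
    have hpv : (p : S) * v ∈ I := by
      have : (p : S) * v = a + PowerSeries.X ^ α * σ := by rw [ha_eq]; ring
      rw [this]
      exact Ideal.add_mem _ haI (I.mul_mem_right σ hXαI)
    have hvunit : IsUnit v := by
      rw [PowerSeries.isUnit_iff_constantCoeff]
      simp [hv]
    obtain ⟨w', hw'⟩ := hvunit
    have : (p : S) = (p : S) * v * (↑w'⁻¹ : S) := by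
      rw [← hw', mul_assoc, Units.mul_inv, mul_one]
    rw [this]
    exact I.mul_mem_right _ hpv
end

section
/- For every n ≥ 0, the natural map (M_tor)^{(n)}[E] → M^{(n)}[E] is an isomorphism, and M^{(n)}[E] is killed by a power of p. Here N^{(n)} denotes 𝔖 ⊗_{𝔖,φ^n} N and N[E] the E-torsion submodule. -/
noncomputable section

variable {R : Type*} [CommRing R]

/-- A copy of `R` regarded as a module over `R` through the ring endomorphism `ψ`. -/
def TwBase (ψ : R →+* R) : Type _ := R

instance (ψ : R →+* R) : CommRing (TwBase ψ) := inferInstanceAs (CommRing R)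
instance (ψ : R →+* R) : Module R (TwBase ψ) := Module.compHom R ψ

/-- The base change (Frobenius twist) `ψ^*M = R ⊗_{R,ψ} M` of a module `M` along `ψ`. -/
def Twist (ψ : R →+* R) (M : Type*) [AddCommGroup M] [Module R M] : Type _ :=
  TensorProduct R (TwBase ψ) M

instance (ψ : R →+* R) (M : Type*) [AddCommGroup M] [Module R M] :
    AddCommGroup (Twist ψ M) :=
  inferInstanceAs (AddCommGroup (TensorProduct R (TwBase ψ) M))

instance (ψ : R →+* R) (M : Type*) [AddCommGroup M] [Module R M] : Module R (Twist ψ M) :=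
  inferInstanceAs (Module R (TensorProduct R (TwBase ψ) M))

/-- Multiplication by `a` on the left factor of the twist, as an `R`-linear map on `TwBase ψ`. -/
def twMulBase (ψ : R →+* R) (a : R) : TwBase ψ →ₗ[R] TwBase ψ where
  toFun x := Mul.mul a x
  map_add' x y := mul_add a x y
  map_smul' r x := mul_left_comm a (ψ r) x

/-- "Target" multiplication by `a ∈ R` on the twist `ψ^*M`; this realises the natural
module structure of the base change over the target copy of `R`. -/
def twistSMul (ψ : R →+* R) (a : R) (M : Type*) [AddCommGroup M] [Module R M] :
    Twist ψ M →ₗ[R] Twist ψ M :=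
  TensorProduct.map (twMulBase ψ a) LinearMap.id

/-- Functoriality of the twist: the map `ψ^*f : ψ^*M → ψ^*N` induced by `f : M → N`. -/
def twistMap (ψ : R →+* R) {M N : Type*} [AddCommGroup M] [Module R M]
    [AddCommGroup N] [Module R N] (f : M →ₗ[R] N) : Twist ψ M →ₗ[R] Twist ψ N :=
  LinearMap.lTensor (TwBase ψ) f

/-- The `n`-th iterate of a ring endomorphism, as a ring homomorphism. -/
def iterateHom (σ : R →+* R) : ℕ → R →+* R
  | 0 => RingHom.id R
  | n + 1 => σ.comp (iterateHom σ n)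

/-- The submodule of elements killed by a power of `r`. -/
def pPrim (r : R) (M : Type*) [AddCommGroup M] [Module R M] : Submodule R M where
  carrier := {x | ∃ n : ℕ, r ^ n • x = 0}
  zero_mem' := ⟨0, smul_zero _⟩
  add_mem' := by
    rintro a b ⟨na, ha⟩ ⟨nb, hb⟩
    refine ⟨na + nb, ?_⟩
    have h1 : r ^ (na + nb) • a = 0 := by
      rw [pow_add, mul_comm, mul_smul, ha, smul_zero]
    have h2 : r ^ (na + nb) • b = 0 := by
      rw [pow_add, mul_smul, hb, smul_zero]
    rw [smul_add, h1, h2, add_zero]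
  smul_mem' := by
    rintro c x ⟨n, hn⟩
    exact ⟨n, by rw [smul_comm, hn, smul_zero]⟩

end

noncomputable section Aux11

open PowerSeries

lemma iterateHom_apply_succ {R : Type*} [CommRing R] (σ : R →+* R) (n : ℕ) (x : R) :
    iterateHom σ (n + 1) x = σ (iterateHom σ n x) := rfl

lemma iterateHom_bijective {R : Type*} [CommRing R] {σ : R →+* R}
    (h : Function.Bijective σ) (n : ℕ) : Function.Bijective (iterateHom σ n) := by
  induction n with
  | zero => exact Function.bijective_id
  | succ n ih => exact h.comp ih

lemma coeff_iterateHom {p : ℕ} [Fact p.Prime] {k : Type*} [CommRing k] [CharP k p]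
    (σ : PowerSeries (WittVector p k) →+* PowerSeries (WittVector p k))
    (hσ : ∀ (f : PowerSeries (WittVector p k)) (m : ℕ),
      PowerSeries.coeff m (σ f) =
        if p ∣ m then WittVector.frobenius (PowerSeries.coeff (m / p) f) else 0)
    (n : ℕ) (f : PowerSeries (WittVector p k)) (m : ℕ) :
    PowerSeries.coeff m (iterateHom σ n f) =
      if p ^ n ∣ m then
        iterateHom (WittVector.frobenius) n (PowerSeries.coeff (m / p ^ n) f)
      else 0 := by
  induction n generalizing m with
  | zero => simp [iterateHom]
  | succ n ih =>
    rw [iterateHom_apply_succ, hσ]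
    by_cases h1 : p ∣ m
    · rw [if_pos h1, ih]
      have hiff : p ^ n ∣ m / p ↔ p ^ (n + 1) ∣ m := by
        rw [Nat.dvd_div_iff_mul_dvd h1, ← pow_succ']
      by_cases h2 : p ^ (n + 1) ∣ m
      · rw [if_pos (hiff.mpr h2), if_pos h2, Nat.div_div_eq_div_mul, ← pow_succ']
        rfl
      · rw [if_neg (fun hh => h2 (hiff.mp hh)), if_neg h2, map_zero]
    · rw [if_neg h1, if_neg fun h2 => h1 ((dvd_pow_self p n.succ_ne_zero).trans h2)]

/-- If `ψ` on `A⟦X⟧` is given by `F` on coefficients composed with `X ↦ X^q`, then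
`A⟦X⟧`, viewed as a module over itself through `ψ`, is free with basis `1, X, …, X^(q-1)`. -/
lemma exists_twEquiv {A : Type*} [CommRing A]
    (ψ : PowerSeries A →+* PowerSeries A) (q : ℕ) (hq : 0 < q)
    (F : A →+* A) (hFinj : Function.Injective F) (hFsurj : Function.Surjective F)
    (hψ : ∀ (f : PowerSeries A) (m : ℕ),
      PowerSeries.coeff m (ψ f) = if q ∣ m then F (PowerSeries.coeff (m / q) f) else 0) :
    Nonempty ((Fin q → PowerSeries A) ≃ₗ[PowerSeries A] TwBase ψ) := by
  classical
  set S := PowerSeries A with hS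
  let L' : (Fin q → S) → S := fun g => ∑ i : Fin q, ψ (g i) * (PowerSeries.X : S) ^ (i : ℕ)
  have key : ∀ (g : Fin q → S) (m : ℕ),
      PowerSeries.coeff m (L' g)
        = F (PowerSeries.coeff (m / q) (g ⟨m % q, Nat.mod_lt m hq⟩)) := by
    intro g m
    rw [show L' g = ∑ i : Fin q, ψ (g i) * (PowerSeries.X : S) ^ (i : ℕ) from rfl, map_sum]
    rw [Finset.sum_eq_single (⟨m % q, Nat.mod_lt m hq⟩ : Fin q)]
    · rw [PowerSeries.coeff_mul_X_pow', if_pos (Nat.mod_le m q), hψ]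
      have h1 : m - m % q = q * (m / q) := by
        have := Nat.div_add_mod m q; omega
      rw [h1, if_pos (dvd_mul_right q (m / q)), Nat.mul_div_cancel_left _ hq]
    · intro i _ hne
      rw [PowerSeries.coeff_mul_X_pow']
      split_ifs with hle
      · rw [hψ, if_neg]
        rintro ⟨c, hc⟩
        apply hne
        apply Fin.ext
        show (i : ℕ) = m % q
        have hm : m = q * c + (i : ℕ) := by omega
        rw [hm, Nat.mul_add_mod, Nat.mod_eq_of_lt i.isLt]
      · rfl
    · exact fun h => absurd (Finset.mem_univ _) h
  have hker : ∀ g : Fin q → S, L' g = 0 → g = 0 := by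
    intro g hg
    funext i
    ext j
    apply hFinj
    have h2 := key g (q * j + (i : ℕ))
    have h3 : ((⟨(q * j + (i : ℕ)) % q, Nat.mod_lt _ hq⟩ : Fin q)) = i :=
      Fin.ext (show (q * j + (i : ℕ)) % q = (i : ℕ) by
        rw [Nat.mul_add_mod, Nat.mod_eq_of_lt i.isLt])
    have h4 : (q * j + (i : ℕ)) / q = j := by
      rw [Nat.mul_add_div hq, Nat.div_eq_of_lt i.isLt, add_zero]
    rw [hg, h3, h4, map_zero] at h2
    simp [← h2]
  have hsurj : ∀ f : S, ∃ g : Fin q → S, L' g = f := by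
    intro f
    refine ⟨fun i => PowerSeries.mk fun j =>
      Function.surjInv hFsurj (PowerSeries.coeff (q * j + (i : ℕ)) f), ?_⟩
    ext m
    rw [key, PowerSeries.coeff_mk, Function.surjInv_eq hFsurj]
    conv_rhs => rw [← Nat.div_add_mod m q]
  have hsub : ∀ a b : Fin q → S, L' (a - b) = L' a - L' b := by
    intro a b
    show (∑ i : Fin q, ψ ((a - b) i) * (PowerSeries.X : S) ^ (i : ℕ)) = _
    rw [← Finset.sum_sub_distrib]
    exact Finset.sum_congr rfl fun i _ => by rw [Pi.sub_apply, map_sub, sub_mul]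
  let L : (Fin q → S) →ₗ[S] TwBase ψ :=
    { toFun := L'
      map_add' := fun g h => by
        show L' (g + h) = L' g + L' h
        show (∑ i : Fin q, ψ ((g + h) i) * (PowerSeries.X : S) ^ (i : ℕ)) = _
        rw [← Finset.sum_add_distrib]
        exact Finset.sum_congr rfl fun i _ => by rw [Pi.add_apply, map_add, add_mul]
      map_smul' := fun r g => by
        show L' (r • g) = ψ r * L' g
        show (∑ i : Fin q, ψ ((r • g) i) * (PowerSeries.X : S) ^ (i : ℕ)) = _
        rw [Finset.mul_sum]
        exact Finset.sum_congr rfl fun i _ => by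
          rw [Pi.smul_apply, smul_eq_mul, map_mul, mul_assoc] }
  refine ⟨LinearEquiv.ofBijective L ⟨?_, ?_⟩⟩
  · intro a b h
    have h' : L' a = L' b := h
    have : L' (a - b) = 0 := by rw [hsub, h', sub_self]
    exact sub_eq_zero.mp (hker _ this)
  · intro f
    exact hsurj f

/-- Commutation of `twistSMul` with `twistMap`. -/
lemma twistSMul_comp_twistMap {R : Type*} [CommRing R] (ψ : R →+* R) (a : R)
    {M N : Type*} [AddCommGroup M] [Module R M] [AddCommGroup N] [Module R N]
    (f : M →ₗ[R] N) :
    (twistSMul ψ a N).comp (twistMap ψ f) = (twistMap ψ f).comp (twistSMul ψ a M) := by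
  show (TensorProduct.map (twMulBase ψ a) LinearMap.id).comp
        (TensorProduct.map LinearMap.id f)
      = (TensorProduct.map LinearMap.id f).comp
        (TensorProduct.map (twMulBase ψ a) LinearMap.id)
  rw [← TensorProduct.map_comp, ← TensorProduct.map_comp]
  simp

end Aux11

set_option maxHeartbeats 1000000 in
/-- Let `k` be a perfect field of characteristic `p`, `W = W(k)`,
`𝔖 = W[[u]]` with its Frobenius lift `σ`, `E ∈ W[u]` an Eisenstein polynomial of degree
`e`, `M` a finitely generated `𝔖`-module whose torsion submodule `M_tor` is killed by a
power of `p`. For every `n ≥ 0`, the natural map `(M_tor)^{(n)}[E] → M^{(n)}[E]` is an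
isomorphism, and `M^{(n)}[E]` is killed by a power of `p`. Here `N^{(n)} = 𝔖 ⊗_{𝔖,σ^n} N`
(the module `Twist (iterateHom σ n) N`, with `E` acting through `twistSMul`) and `N[E]`
is the `E`-torsion submodule. -/
theorem stmt_11 {p : ℕ} [Fact p.Prime] {k : Type*} [Field k] [CharP k p] [PerfectField k]
    (σ : PowerSeries (WittVector p k) →+* PowerSeries (WittVector p k))
    (hσ : ∀ (f : PowerSeries (WittVector p k)) (m : ℕ),
      PowerSeries.coeff m (σ f) =
        if p ∣ m then WittVector.frobenius (PowerSeries.coeff (m / p) f) else 0)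
    (E : Polynomial (WittVector p k)) (e : ℕ) (hE : E.Monic) (hdeg : E.natDegree = e)
    (hco : ∀ i < e, (p : WittVector p k) ∣ E.coeff i)
    (hconst : ∃ v : (WittVector p k)ˣ, E.coeff 0 = (p : WittVector p k) * v)
    (M : Type*) [AddCommGroup M] [Module (PowerSeries (WittVector p k)) M]
    [Module.Finite (PowerSeries (WittVector p k)) M]
    (htor : ∃ N : ℕ, ∀ x ∈ Submodule.torsion (PowerSeries (WittVector p k)) M,
      (p : PowerSeries (WittVector p k)) ^ N • x = 0)
    (n : ℕ) :
    let 𝔖 := PowerSeries (WittVector p k)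
    let ψ := iterateHom σ n
    let Mtor := Submodule.torsion 𝔖 M
    let ι := twistMap ψ Mtor.subtype
    ∃ h : ∀ x ∈ LinearMap.ker (twistSMul ψ (E : 𝔖) Mtor),
        ι x ∈ LinearMap.ker (twistSMul ψ (E : 𝔖) M),
      Function.Bijective (ι.restrict h) ∧
        ∀ y ∈ LinearMap.ker (twistSMul ψ (E : 𝔖) M),
          ∃ N : ℕ, (p : 𝔖) ^ N • y = 0 := by
  intro 𝔖 ψ Mtor ι
  classical
  obtain ⟨NN, hNN⟩ := htor
  have hq : 0 < p ^ n := pow_pos (Nat.Prime.pos Fact.out) n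
  have hFbij : Function.Bijective
      (iterateHom (WittVector.frobenius : WittVector p k →+* WittVector p k) n) :=
    iterateHom_bijective (WittVector.frobenius_bijective p k) n
  obtain ⟨eL⟩ := exists_twEquiv ψ (p ^ n) hq
    (iterateHom (WittVector.frobenius : WittVector p k →+* WittVector p k) n)
    hFbij.injective hFbij.surjective (coeff_iterateHom σ hσ n)
  haveI : Module.Flat 𝔖 (Fin (p ^ n) → 𝔖) := by
    haveI := Module.Free.of_basis (Pi.basisFun 𝔖 (Fin (p ^ n)))
    exact Module.Flat.of_free
  haveI : Module.Flat 𝔖 (TwBase ψ) :=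
    Module.Flat.of_linearEquiv eL.symm
  have hι_inj : Function.Injective ι :=
    Module.Flat.lTensor_preserves_injective_linearMap (M := TwBase ψ) Mtor.subtype
      (Submodule.injective_subtype Mtor)
  have hE0 : (E : 𝔖) ≠ 0 := fun hc => hE.ne_zero (Polynomial.coe_eq_zero_iff.mp hc)
  set ℓE : TwBase ψ →ₗ[𝔖] TwBase ψ := twMulBase ψ (E : 𝔖) with hℓEdef
  have hcancel : ∀ a b : 𝔖, (E : 𝔖) * a = (E : 𝔖) * b → a = b :=
    fun _ _ hab => mul_left_cancel₀ hE0 hab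
  have hℓE_inj : Function.Injective ℓE := fun a b hab => hcancel a b hab
  let T : (Fin (p ^ n) → 𝔖) →ₗ[𝔖] (Fin (p ^ n) → 𝔖) :=
    (eL.symm.toLinearMap.comp ℓE).comp eL.toLinearMap
  have hT_apply : ∀ v, T v = eL.symm (ℓE (eL v)) := fun _ => rfl
  have hT_inj : Function.Injective T := by
    intro a b hab
    rw [hT_apply, hT_apply] at hab
    exact eL.injective (hℓE_inj (eL.symm.injective hab))
  set Mm := LinearMap.toMatrix' T with hMm
  have hTm : Matrix.toLin' Mm = T := Matrix.toLin'_toMatrix' T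
  set d := Mm.det with hd
  have hd0 : d ≠ 0 := by
    intro h0
    obtain ⟨v, hv0, hv⟩ := Matrix.exists_mulVec_eq_zero_iff.mpr h0
    refine hv0 (hT_inj (show T v = T 0 by rw [← hTm, Matrix.toLin'_apply, hv, map_zero]))
  have hST : (Matrix.toLin' Mm.adjugate).comp T = d • LinearMap.id := by
    rw [← hTm, ← Matrix.toLin'_mul, Matrix.adjugate_mul]
    rw [show Matrix.toLin' (d • (1 : Matrix (Fin (p ^ n)) (Fin (p ^ n)) 𝔖))
        = d • Matrix.toLin' 1 from map_smul _ d 1, Matrix.toLin'_one]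
  let SA : TwBase ψ →ₗ[𝔖] TwBase ψ :=
    (eL.toLinearMap.comp (Matrix.toLin' Mm.adjugate)).comp eL.symm.toLinearMap
  have hSAE : ∀ x : TwBase ψ, SA (ℓE x) = d • x := by
    intro x
    have h1 : eL.symm (ℓE x) = T (eL.symm x) := by
      rw [hT_apply, LinearEquiv.apply_symm_apply]
    show eL (Matrix.toLin' Mm.adjugate (eL.symm (ℓE x))) = d • x
    rw [h1, ← LinearMap.comp_apply, hST]
    simp
  have hSAcomp : SA.comp ℓE = (d • LinearMap.id : TwBase ψ →ₗ[𝔖] TwBase ψ) :=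
    LinearMap.ext fun x => by
      rw [LinearMap.comp_apply, hSAE x, LinearMap.smul_apply, LinearMap.id_apply]
  haveI : Module.IsTorsionFree 𝔖 (M ⧸ Mtor) :=
    inferInstanceAs (Module.IsTorsionFree 𝔖 (M ⧸ Submodule.torsion 𝔖 M))
  have hdinj : ∀ z : TensorProduct 𝔖 (TwBase ψ) (M ⧸ Mtor), d • z = 0 → z = 0 := by
    intro z hz
    let eA' : TwBase ψ ≃ₗ[𝔖] (Fin (p ^ n) →₀ 𝔖) :=
      eL.symm ≪≫ₗ (Finsupp.linearEquivFunOnFinite 𝔖 𝔖 (Fin (p ^ n))).symm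
    let Φ : TensorProduct 𝔖 (TwBase ψ) (M ⧸ Mtor) ≃ₗ[𝔖] (Fin (p ^ n) →₀ (M ⧸ Mtor)) :=
      (TensorProduct.congr eA' (LinearEquiv.refl 𝔖 (M ⧸ Mtor))).trans
        (TensorProduct.finsuppScalarLeft 𝔖 (M ⧸ Mtor) (Fin (p ^ n)))
    have h1 : Φ z = 0 := by
      have h2 : d • Φ z = 0 := by rw [← map_smul, hz, map_zero]
      ext j
      have h3 : d • (Φ z) j = 0 := by rw [← Finsupp.smul_apply, h2]; rfl
      rcases smul_eq_zero.mp h3 with h | h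
      · exact absurd h hd0
      · simpa using h
    simpa using congrArg Φ.symm h1
  have hEQinj : ∀ z : TensorProduct 𝔖 (TwBase ψ) (M ⧸ Mtor),
      TensorProduct.map ℓE (LinearMap.id : (M ⧸ Mtor) →ₗ[𝔖] (M ⧸ Mtor)) z = 0 → z = 0 := by
    intro z hz
    apply hdinj
    have hcomp : (TensorProduct.map SA (LinearMap.id : (M ⧸ Mtor) →ₗ[𝔖] (M ⧸ Mtor))).comp
        (TensorProduct.map ℓE LinearMap.id)
        = d • (LinearMap.id :
            TensorProduct 𝔖 (TwBase ψ) (M ⧸ Mtor) →ₗ[𝔖] TensorProduct 𝔖 (TwBase ψ) (M ⧸ Mtor)) := by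
      rw [← TensorProduct.map_comp, hSAcomp, LinearMap.id_comp,
        TensorProduct.map_smul_left, TensorProduct.map_id]
    calc d • z
        = (d • (LinearMap.id :
            TensorProduct 𝔖 (TwBase ψ) (M ⧸ Mtor) →ₗ[𝔖] TensorProduct 𝔖 (TwBase ψ) (M ⧸ Mtor))) z :=
          rfl
      _ = TensorProduct.map SA LinearMap.id (TensorProduct.map ℓE LinearMap.id z) := by
          rw [← hcomp]; rfl
      _ = 0 := by rw [hz, map_zero]
  have hexact := lTensor_exact (TwBase ψ) (LinearMap.exact_subtype_mkQ Mtor)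
    (Submodule.mkQ_surjective Mtor)
  have hcommM := twistSMul_comp_twistMap ψ (E : 𝔖) Mtor.subtype
  have hcommM' : ∀ x, twistSMul ψ (E : 𝔖) M (ι x) = ι (twistSMul ψ (E : 𝔖) Mtor x) :=
    fun x => LinearMap.congr_fun hcommM x
  have hcommQ := twistSMul_comp_twistMap ψ (E : 𝔖) Mtor.mkQ
  have hrange : ∀ y, twistSMul ψ (E : 𝔖) M y = 0 → ∃ x, ι x = y := by
    intro y hy
    have h1 : LinearMap.lTensor (TwBase ψ) Mtor.mkQ (twistSMul ψ (E : 𝔖) M y) = 0 := by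
      rw [hy]; exact map_zero (LinearMap.lTensor (TwBase ψ) Mtor.mkQ)
    have h2 : TensorProduct.map ℓE (LinearMap.id : (M ⧸ Mtor) →ₗ[𝔖] (M ⧸ Mtor))
        (LinearMap.lTensor (TwBase ψ) Mtor.mkQ y) = 0 :=
      (LinearMap.congr_fun hcommQ y).trans h1
    have h3 : LinearMap.lTensor (TwBase ψ) Mtor.mkQ y = 0 := hEQinj _ h2
    exact (hexact y).mp h3
  have hkill : ∀ x : TensorProduct 𝔖 (TwBase ψ) Mtor, (p : 𝔖) ^ NN • x = 0 := by
    intro x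
    induction x using TensorProduct.induction_on with
    | zero => simp
    | tmul a m =>
      rw [← TensorProduct.tmul_smul]
      have hm : ((p : 𝔖) ^ NN • m : Mtor) = 0 := Subtype.ext (by
        rw [Submodule.coe_smul]
        exact hNN (m : M) m.2)
      rw [hm, TensorProduct.tmul_zero]
    | add u v hu hv => rw [smul_add, hu, hv, add_zero]
  have hker_map : ∀ x ∈ LinearMap.ker (twistSMul ψ (E : 𝔖) Mtor),
      ι x ∈ LinearMap.ker (twistSMul ψ (E : 𝔖) M) := by
    intro x hx
    rw [LinearMap.mem_ker] at hx ⊢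
    rw [hcommM' x, hx, map_zero]
  refine ⟨hker_map, ⟨?_, ?_⟩, ?_⟩
  · intro a b hab
    have h2 := congrArg Subtype.val hab
    rw [LinearMap.restrict_coe_apply, LinearMap.restrict_coe_apply] at h2
    exact Subtype.ext (hι_inj h2)
  · rintro ⟨y, hy⟩
    obtain ⟨x, hx⟩ := hrange y (LinearMap.mem_ker.mp hy)
    have hxk : x ∈ LinearMap.ker (twistSMul ψ (E : 𝔖) Mtor) := by
      rw [LinearMap.mem_ker]
      apply hι_inj
      rw [← hcommM' x, hx, LinearMap.mem_ker.mp hy, map_zero]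
    refine ⟨⟨x, hxk⟩, ?_⟩
    apply Subtype.ext
    rw [LinearMap.restrict_coe_apply]
    exact hx
  · intro y hy
    obtain ⟨x, hx⟩ := hrange y (LinearMap.mem_ker.mp hy)
    refine ⟨NN, ?_⟩
    have hk : (p : 𝔖) ^ NN • x = 0 := hkill x
    rw [← hx, ← map_smul, hk, map_zero]
end

section
/- Let N' ⊆ N be finitely generated free 𝔖-modules such that the quotient M = N/N' is killed by a power of p. Then for every n ≥ 0, the Frobenius twist M^{(n)} = 𝔖 ⊗_{𝔖,φ^n} M has trivial E-torsion: M^{(n)}[E] = 0. -/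
noncomputable section AuxTwist

open TensorProduct

variable {R : Type*} [CommRing R] (ψ : R →+* R)

theorem twInd {ψ : R →+* R} {M : Type*} [AddCommGroup M] [Module R M] {C : Twist ψ M → Prop}
    (x : Twist ψ M) (zero : C 0) (tmul : ∀ (s : TwBase ψ) (m : M), C (s ⊗ₜ[R] m))
    (add : ∀ x y, C x → C y → C (x + y)) : C x :=
  TensorProduct.induction_on x zero tmul add

/-- The identity of `R`, viewed as landing in the twisted copy. -/
def toTw : R →+* TwBase ψ := RingHom.id R

/-- The identity of `R`, viewed as leaving the twisted copy. -/
def unTw : TwBase ψ →+* R := RingHom.id R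

@[simp] lemma unTw_toTw (x : R) : unTw ψ (toTw ψ x) = x := rfl

@[simp] lemma toTw_unTw (x : TwBase ψ) : toTw ψ (unTw ψ x) = x := rfl

lemma toTw_smul (r x : R) : r • toTw ψ x = toTw ψ (ψ r * x) := rfl

lemma pi_single_eq_smul_single {m : ℕ} (r : R) (i : Fin m) :
    (Pi.single i r : Fin m → R) = r • (Pi.single i 1 : Fin m → R) := by
  funext j
  by_cases h : j = i <;> simp [Pi.single_apply, h]

lemma sum_smul_single {m : ℕ} (w : Fin m → R) :
    ∑ i, w i • (Pi.single i 1 : Fin m → R) = w := by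
  rw [Finset.sum_congr rfl fun i _ => (pi_single_eq_smul_single (w i) i).symm]
  exact Finset.univ_sum_single w

/-- Coordinates of the twist of a finite free module. -/
def twPi (m : ℕ) : Twist ψ (Fin m → R) →+ (Fin m → R) :=
  TensorProduct.liftAddHom
    (AddMonoidHom.mk'
      (fun s => AddMonoidHom.mk' (fun v => fun i => unTw ψ s * ψ (v i))
        (fun v w => by funext i; simp [map_add, mul_add]))
      (fun s t => AddMonoidHom.ext fun v => by
        funext i
        show unTw ψ (s + t) * ψ (v i) = unTw ψ s * ψ (v i) + unTw ψ t * ψ (v i)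
        rw [map_add]; ring))
    (fun r s v => by
      funext i
      show unTw ψ (r • s) * ψ ((v : Fin _ → R) i) = unTw ψ s * ψ ((r • v) i)
      have h1 : unTw ψ (r • s) = ψ r * unTw ψ s := rfl
      have h2 : (r • v) i = r * v i := rfl
      rw [h1, h2, map_mul]; ring)

@[simp] lemma twPi_tmul {m : ℕ} (s : R) (v : Fin m → R) :
    twPi ψ m (toTw ψ s ⊗ₜ[R] v) = fun i => s * ψ (v i) := rfl

def twPiInv (m : ℕ) : (Fin m → R) →+ Twist ψ (Fin m → R) :=
  AddMonoidHom.mk' (fun w => ∑ i, (toTw ψ (w i) ⊗ₜ[R] (Pi.single i 1 : Fin m → R)))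
    (fun w w' => by
      erw [← Finset.sum_add_distrib]
      refine Finset.sum_congr rfl fun i _ => ?_
      erw [← add_tmul, ← map_add]
      rfl)

lemma twPiInv_apply {m : ℕ} (w : Fin m → R) :
    twPiInv ψ m w = ∑ i, (toTw ψ (w i) ⊗ₜ[R] (Pi.single i 1 : Fin m → R)) := rfl

lemma twPi_leftInv {m : ℕ} (x : Twist ψ (Fin m → R)) : twPiInv ψ m (twPi ψ m x) = x := by
  induction x using twInd with
  | zero => simp
  | add x y hx hy => rw [map_add, map_add, hx, hy]
  | tmul s v =>
      have hs : s = toTw ψ (unTw ψ s) := rfl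
      rw [hs, twPi_tmul, twPiInv_apply]
      have h1 : ∀ i : Fin m, (toTw ψ (unTw ψ s * ψ (v i)) ⊗ₜ[R] (Pi.single i 1 : Fin m → R))
          = (toTw ψ (unTw ψ s) ⊗ₜ[R] (Pi.single i (v i) : Fin m → R)) := by
        intro i
        have h2 : toTw ψ (unTw ψ s * ψ (v i)) = (v i) • toTw ψ (unTw ψ s) := by
          rw [toTw_smul]
          exact congrArg (toTw ψ) (mul_comm _ _)
        rw [h2, smul_tmul, ← pi_single_eq_smul_single]
      rw [Finset.sum_congr rfl fun i _ => h1 i, ← tmul_sum]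
      congr 1
      exact Finset.univ_sum_single v

lemma twPi_rightInv {m : ℕ} (w : Fin m → R) : twPi ψ m (twPiInv ψ m w) = w := by
  erw [twPiInv_apply, map_sum]
  funext jj
  rw [Finset.sum_apply]
  have h1 : ∀ i : Fin m, twPi ψ m (toTw ψ (w i) ⊗ₜ[R] (Pi.single i 1 : Fin m → R)) jj
      = if jj = i then w i else 0 := by
    intro i
    rw [twPi_tmul]
    simp [Pi.single_apply, apply_ite ψ]
  rw [Finset.sum_congr rfl fun i _ => h1 i]
  simp

lemma twPi_injective {m : ℕ} : Function.Injective (twPi ψ m) :=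
  Function.LeftInverse.injective (twPi_leftInv ψ)

lemma twistSMul_tmul {M : Type*} [AddCommGroup M] [Module R M] (a s : R) (x : M) :
    twistSMul ψ a M (toTw ψ s ⊗ₜ[R] x) = (toTw ψ (a * s) ⊗ₜ[R] x) := rfl

lemma twistMap_tmul {M N : Type*} [AddCommGroup M] [Module R M] [AddCommGroup N] [Module R N]
    (f : M →ₗ[R] N) (s : R) (x : M) :
    twistMap ψ f (toTw ψ s ⊗ₜ[R] x) = (toTw ψ s ⊗ₜ[R] f x) := rfl

lemma twPi_twistSMul {m : ℕ} (a : R) (x : Twist ψ (Fin m → R)) :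
    twPi ψ m (twistSMul ψ a _ x) = fun i => a * twPi ψ m x i := by
  induction x using twInd with
  | zero => funext i; simp
  | add x y hx hy => funext i; simp only [map_add, Pi.add_apply, hx, hy]; ring
  | tmul s v =>
      have hs : s = toTw ψ (unTw ψ s) := rfl
      rw [hs, twistSMul_tmul, twPi_tmul, twPi_tmul]
      funext i
      ring

lemma twistMap_twistSMul {M N : Type*} [AddCommGroup M] [Module R M] [AddCommGroup N]
    [Module R N] (f : M →ₗ[R] N) (a : R) (x : Twist ψ M) :
    twistMap ψ f (twistSMul ψ a M x) = twistSMul ψ a N (twistMap ψ f x) := by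
  induction x using twInd with
  | zero => simp
  | add x y hx hy => simp only [map_add, hx, hy]
  | tmul s v => rfl

lemma twPi_twistMap {m m' : ℕ} (f : (Fin m → R) →ₗ[R] (Fin m' → R)) (x : Twist ψ (Fin m → R)) :
    twPi ψ m' (twistMap ψ f x) = fun i => ∑ l, ψ (f (Pi.single l 1) i) * twPi ψ m x l := by
  induction x using twInd with
  | zero => funext i; simp
  | add x y hx hy =>
      funext i
      simp only [map_add, Pi.add_apply, hx, hy, ← Finset.sum_add_distrib]
      exact Finset.sum_congr rfl fun l _ => by ring
  | tmul s v =>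
      have hs : s = toTw ψ (unTw ψ s) := rfl
      rw [hs, twistMap_tmul, twPi_tmul]
      funext i
      simp only [twPi_tmul]
      have hv : f v = ∑ l, v l • f (Pi.single l (1:R)) :=
        calc f v = f (∑ l, Pi.single l (v l)) := by rw [Finset.univ_sum_single]
        _ = ∑ l, f (Pi.single l (v l)) := map_sum f _ _
        _ = ∑ l, v l • f (Pi.single l (1:R)) :=
            Finset.sum_congr rfl fun l _ => by rw [pi_single_eq_smul_single, map_smul]
      rw [hv]
      simp only [Finset.sum_apply, Pi.smul_apply, smul_eq_mul, map_sum, map_mul, Finset.mul_sum]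
      exact Finset.sum_congr rfl fun l _ => by ring

lemma iterateHom_injective (σ : R →+* R) (h : Function.Injective σ) (n : ℕ) :
    Function.Injective (iterateHom σ n) := by
  induction n with
  | zero => exact fun a b hh => hh
  | succ n ih => exact h.comp ih

end AuxTwist

noncomputable section AuxWitt

variable {p : ℕ} [Fact p.Prime] {k : Type*} [Field k] [CharP k p] [PerfectField k]

lemma pS_ne_zero : (p : PowerSeries (WittVector p k)) ≠ 0 := by
  intro h0
  exact WittVector.p_nonzero p k
    (by simpa using congrArg (PowerSeries.constantCoeff (R := WittVector p k)) h0)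

lemma eis_cancel (E : Polynomial (WittVector p k)) (e : ℕ) (hE : E.Monic)
    (hdeg : E.natDegree = e) (hco : ∀ i < e, (p : WittVector p k) ∣ E.coeff i) :
    ∀ (N : ℕ) (y z : PowerSeries (WittVector p k)),
      (p : PowerSeries (WittVector p k)) ^ N * y = (E : PowerSeries (WittVector p k)) * z →
      ∃ y', y = (E : PowerSeries (WittVector p k)) * y' := by
  intro N
  induction N with
  | zero =>
      intro y z h
      exact ⟨z, by simpa using h⟩
  | succ N ih =>
      intro y z h
      have hpz : ∀ m : ℕ, (p : WittVector p k) ∣ PowerSeries.coeff m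
          ((E : PowerSeries (WittVector p k)) * z) := by
        intro m
        have h1 : (E : PowerSeries (WittVector p k)) * z =
            (p : PowerSeries (WittVector p k)) * ((p : PowerSeries (WittVector p k)) ^ N * y) := by
          rw [← h]; ring
        have h2 : (p : PowerSeries (WittVector p k)) =
            PowerSeries.C (R := WittVector p k) (p : WittVector p k) := by
          rw [map_natCast]
        rw [h1, h2, PowerSeries.coeff_C_mul]
        exact Dvd.intro _ rfl
      have hz : ∀ m : ℕ, (p : WittVector p k) ∣ PowerSeries.coeff m z := by
        intro m
        have h2 := hpz (e + m)
        rw [PowerSeries.coeff_mul] at h2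
        have hmem : ((e, m) : ℕ × ℕ) ∈ Finset.HasAntidiagonal.antidiagonal (e + m) := by
          simp [Finset.mem_antidiagonal]
        rw [← Finset.add_sum_erase _ _ hmem] at h2
        have hee : PowerSeries.coeff e (E : PowerSeries (WittVector p k)) = 1 := by
          rw [Polynomial.coeff_coe, ← hdeg]
          exact hE.coeff_natDegree
        rw [hee, one_mul] at h2
        have hrest : (p : WittVector p k) ∣ ∑ x ∈ (Finset.HasAntidiagonal.antidiagonal (e + m)).erase (e, m),
            PowerSeries.coeff x.1 (E : PowerSeries (WittVector p k)) *
              PowerSeries.coeff x.2 z := by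
          refine Finset.dvd_sum fun x hx => ?_
          obtain ⟨hne, hadd⟩ := Finset.mem_erase.mp hx
          rw [Finset.HasAntidiagonal.mem_antidiagonal] at hadd
          rcases lt_trichotomy x.1 e with hlt | heq | hgt
          · exact Dvd.dvd.mul_right (by rw [Polynomial.coeff_coe]; exact hco _ hlt) _
          · exact absurd (Prod.ext heq (by omega)) hne
          · rw [Polynomial.coeff_coe,
              Polynomial.coeff_eq_zero_of_natDegree_lt (by omega), zero_mul]
            exact dvd_zero _
        exact (dvd_add_left hrest).mp h2
      choose zc hzc using hz
      have hz' : z = (p : PowerSeries (WittVector p k)) * PowerSeries.mk zc := by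
        refine PowerSeries.ext fun m => ?_
        have h2 : (p : PowerSeries (WittVector p k)) =
            PowerSeries.C (R := WittVector p k) (p : WittVector p k) := by
          rw [map_natCast]
        rw [h2, PowerSeries.coeff_C_mul, PowerSeries.coeff_mk]
        exact hzc m
      have h3 : (p : PowerSeries (WittVector p k)) *
            ((p : PowerSeries (WittVector p k)) ^ N * y) =
          (p : PowerSeries (WittVector p k)) *
            ((E : PowerSeries (WittVector p k)) * PowerSeries.mk zc) := by
        rw [← mul_assoc, ← pow_succ', h, hz']; ring
      exact ih y (PowerSeries.mk zc) (mul_left_cancel₀ pS_ne_zero h3)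

lemma sigma_injective (σ : PowerSeries (WittVector p k) →+* PowerSeries (WittVector p k))
    (hσ : ∀ (f : PowerSeries (WittVector p k)) (m : ℕ),
      PowerSeries.coeff m (σ f) =
        if p ∣ m then WittVector.frobenius (PowerSeries.coeff (m / p) f) else 0) :
    Function.Injective σ := by
  have hker : ∀ f, σ f = 0 → f = 0 := by
    intro f hf
    refine PowerSeries.ext fun m => ?_
    have h1 := congrArg (PowerSeries.coeff (R := WittVector p k) (p * m)) hf
    rw [hσ, if_pos ⟨m, rfl⟩, Nat.mul_div_cancel_left m (Nat.Prime.pos Fact.out),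
      map_zero] at h1
    have hfr := (WittVector.frobenius_bijective (p := p) (R := k)).injective
    simp only [map_zero]
    refine hfr ?_
    rw [h1]
    simp
  intro f g hfg
  rw [← sub_eq_zero]
  exact hker _ (by rw [map_sub, hfg, sub_self])

lemma ES_ne_zero (E : Polynomial (WittVector p k)) (hE : E.Monic) :
    (E : PowerSeries (WittVector p k)) ≠ 0 := by
  intro h0
  have h1 := congrArg (PowerSeries.coeff (R := WittVector p k) E.natDegree) h0
  rw [Polynomial.coeff_coe, hE.coeff_natDegree, map_zero] at h1
  exact one_ne_zero h1

end AuxWitt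

open TensorProduct in
set_option maxHeartbeats 1000000 in
/-- Let `k` be a perfect field of characteristic `p`, `W = W(k)`,
`𝔖 = W[[u]]` with its Frobenius lift `σ`, and `E ∈ W[u]` an Eisenstein polynomial of
degree `e`. Let `N' ⊆ N` be finitely generated free `𝔖`-modules (presented here as an
injective `𝔖`-linear map `j : 𝔖^a → 𝔖^b`), such that `M = N/N'` is killed by a power of
`p`. Then for every `n ≥ 0`, the Frobenius twist `M^{(n)} = 𝔖 ⊗_{𝔖,σ^n} M` has trivial
`E`-torsion: `M^{(n)}[E] = 0`. -/
theorem stmt_13 {p : ℕ} [Fact p.Prime] {k : Type*} [Field k] [CharP k p] [PerfectField k]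
    (σ : PowerSeries (WittVector p k) →+* PowerSeries (WittVector p k))
    (hσ : ∀ (f : PowerSeries (WittVector p k)) (m : ℕ),
      PowerSeries.coeff m (σ f) =
        if p ∣ m then WittVector.frobenius (PowerSeries.coeff (m / p) f) else 0)
    (E : Polynomial (WittVector p k)) (e : ℕ) (hE : E.Monic) (hdeg : E.natDegree = e)
    (hco : ∀ i < e, (p : WittVector p k) ∣ E.coeff i)
    (hconst : ∃ v : (WittVector p k)ˣ, E.coeff 0 = (p : WittVector p k) * v)
    (a b : ℕ)
    (j : (Fin a → PowerSeries (WittVector p k)) →ₗ[PowerSeries (WittVector p k)]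
      (Fin b → PowerSeries (WittVector p k)))
    (hj : Function.Injective j)
    (hM : ∃ N : ℕ, ∀ x : (Fin b → PowerSeries (WittVector p k)) ⧸ LinearMap.range j,
      (p : PowerSeries (WittVector p k)) ^ N • x = 0)
    (n : ℕ) :
    let 𝔖 := PowerSeries (WittVector p k)
    let ψ := iterateHom σ n
    LinearMap.ker (twistSMul ψ (E : 𝔖) ((Fin b → 𝔖) ⧸ LinearMap.range j)) = ⊥ := by
  intro 𝔖 ψ
  classical
  have hψinj : Function.Injective ψ := iterateHom_injective σ (sigma_injective σ hσ) n
  obtain ⟨N, hN⟩ := hM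
  have hrange : ∀ u : Fin b → 𝔖, (p : 𝔖) ^ N • u ∈ LinearMap.range j := by
    intro u
    have h1 := hN (Submodule.Quotient.mk u)
    rwa [← Submodule.Quotient.mk_smul, Submodule.Quotient.mk_eq_zero] at h1
  have hrch : ∀ i : Fin b, ∃ w, j w = (p : 𝔖) ^ N • (Pi.single i 1 : Fin b → 𝔖) := by
    intro i
    obtain ⟨w, hw⟩ := hrange (Pi.single i 1 : Fin b → 𝔖)
    exact ⟨w, hw⟩
  choose vv hvv using hrch
  -- an "inverse up to p^N" of j
  have hpNne : ((p : 𝔖) ^ N) ≠ 0 := pow_ne_zero _ pS_ne_zero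
  have hEne : (E : 𝔖) ≠ 0 := ES_ne_zero E hE
  let g : (Fin b → 𝔖) →ₗ[𝔖] (Fin a → 𝔖) :=
    { toFun := fun w => ∑ i, w i • vv i
      map_add' := by
        intro w w'
        show ∑ i, (w + w') i • vv i = ∑ i, w i • vv i + ∑ i, w' i • vv i
        rw [← Finset.sum_add_distrib]
        exact Finset.sum_congr rfl fun i _ => by
          rw [← add_smul]; rfl
      map_smul' := by
        intro r w
        show ∑ i, (r • w) i • vv i = r • ∑ i, w i • vv i
        rw [Finset.smul_sum]
        exact Finset.sum_congr rfl fun i _ => by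
          show (r * w i) • vv i = r • (w i • vv i)
          rw [mul_smul] }
  have hjg : ∀ w : Fin b → 𝔖, j (g w) = (p : 𝔖) ^ N • w := by
    intro w
    show j (∑ i, w i • vv i) = _
    rw [map_sum]
    calc ∑ i, j (w i • vv i)
        = ∑ i, w i • ((p : 𝔖) ^ N • (Pi.single i 1 : Fin b → 𝔖)) := by
          refine Finset.sum_congr rfl fun i _ => ?_
          rw [map_smul, hvv]
      _ = (p : 𝔖) ^ N • ∑ i, w i • (Pi.single i 1 : Fin b → 𝔖) := by
          rw [Finset.smul_sum]
          exact Finset.sum_congr rfl fun i _ => smul_comm _ _ _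
      _ = (p : 𝔖) ^ N • w := by rw [sum_smul_single]
  have hginj : Function.Injective g := by
    intro w w' hww
    have h1 := congrArg j hww
    rw [hjg, hjg] at h1
    funext i
    have h2 := congrFun h1 i
    exact mul_left_cancel₀ hpNne h2
  have hab : a = b :=
    le_antisymm (le_of_fin_injective 𝔖 j hj) (le_of_fin_injective 𝔖 g hginj)
  subst hab
  -- the matrix of j and its twist
  let A : Matrix (Fin a) (Fin a) 𝔖 := Matrix.of fun i l => j (Pi.single l 1) i
  have hjA : ∀ v : Fin a → 𝔖, j v = fun i => ∑ l, A i l * v l := by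
    intro v
    have hv : j v = ∑ l, v l • j (Pi.single l (1 : 𝔖)) :=
      calc j v = j (∑ l, Pi.single l (v l)) := by rw [Finset.univ_sum_single]
      _ = ∑ l, j (Pi.single l (v l)) := map_sum j _ _
      _ = ∑ l, v l • j (Pi.single l (1 : 𝔖)) :=
          Finset.sum_congr rfl fun l _ => by rw [pi_single_eq_smul_single, map_smul]
    funext i
    rw [hv, Finset.sum_apply]
    exact Finset.sum_congr rfl fun l _ => by
      show v l * j (Pi.single l 1) i = A i l * v l
      rw [mul_comm]
      rfl
  have hdetA : A.det ≠ 0 := by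
    intro hdet
    obtain ⟨v, hv0, hveq⟩ := Matrix.exists_mulVec_eq_zero_iff.mpr hdet
    apply hv0
    have h1 : j v = 0 := by
      rw [hjA]
      funext i
      have h2 := congrFun hveq i
      simpa [Matrix.mulVec, dotProduct] using h2
    exact hj (by rw [h1, map_zero])
  let B : Matrix (Fin a) (Fin a) 𝔖 := A.map ψ
  have hdetB : B.det ≠ 0 := by
    have h1 : B.det = ψ A.det := (RingHom.map_det ψ A).symm
    rw [h1]
    intro h0
    exact hdetA (hψinj (by rw [h0, map_zero]))
  let j' : (Fin a → 𝔖) →ₗ[𝔖] (Fin a → 𝔖) := B.mulVecLin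
  have hj'app : ∀ (w : Fin a → 𝔖) (i : Fin a), j' w i = ∑ l, ψ (A i l) * w l := by
    intro w i
    simp [j', B, Matrix.mulVecLin_apply, Matrix.mulVec, dotProduct, Matrix.map_apply]
  have hj'inj : Function.Injective j' := by
    intro w w' hww
    by_contra hne
    have hsub : B.mulVec (w - w') = 0 := by
      rw [← Matrix.mulVecLin_apply]
      show j' (w - w') = 0
      rw [map_sub, hww, sub_self]
    exact hdetB (Matrix.exists_mulVec_eq_zero_iff.mp ⟨w - w', sub_ne_zero.mpr hne, hsub⟩)
  -- torsion property transported through ψ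
  have hsingle' : ∀ i : Fin a,
      j' (fun l => ψ (vv i l)) = (p : 𝔖) ^ N • (Pi.single i 1 : Fin a → 𝔖) := by
    intro i
    funext i2
    rw [hj'app]
    have h5 : ∑ l, ψ (A i2 l) * ψ (vv i l) = ψ (j (vv i) i2) := by
      rw [hjA (vv i)]
      rw [map_sum]
      exact Finset.sum_congr rfl fun l _ => (map_mul ψ _ _).symm
    rw [h5, hvv]
    have h6 : ((p : 𝔖) ^ N • (Pi.single i 1 : Fin a → 𝔖)) i2
        = (p : 𝔖) ^ N * (Pi.single i 1 : Fin a → 𝔖) i2 := rfl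
    rw [h6, map_mul, map_pow, map_natCast]
    by_cases h7 : i2 = i <;> simp [Pi.single_apply, h7]
  have hrange' : ∀ u : Fin a → 𝔖, ∃ v, j' v = (p : 𝔖) ^ N • u := by
    intro u
    refine ⟨∑ i, u i • (fun l => ψ (vv i l)), ?_⟩
    rw [map_sum]
    calc ∑ i, j' (u i • fun l => ψ (vv i l))
        = ∑ i, u i • ((p : 𝔖) ^ N • (Pi.single i 1 : Fin a → 𝔖)) := by
          refine Finset.sum_congr rfl fun i _ => ?_
          rw [map_smul, hsingle']
      _ = (p : 𝔖) ^ N • ∑ i, u i • (Pi.single i 1 : Fin a → 𝔖) := by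
          rw [Finset.smul_sum]
          exact Finset.sum_congr rfl fun i _ => smul_comm _ _ _
      _ = (p : 𝔖) ^ N • u := by rw [sum_smul_single]
  -- now the main argument
  rw [LinearMap.ker_eq_bot']
  intro x hx
  obtain ⟨y, hy⟩ :=
    LinearMap.lTensor_surjective (TwBase ψ)
      (Submodule.mkQ_surjective (LinearMap.range j)) x
  have h0 : twistMap ψ (LinearMap.range j).mkQ (twistSMul ψ (E : 𝔖) _ y) = 0 := by
    erw [twistMap_twistSMul]
    show twistSMul ψ (E : 𝔖) _ (twistMap ψ (LinearMap.range j).mkQ y) = 0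
    have : twistMap ψ (LinearMap.range j).mkQ y = x := hy
    rw [this, hx]
  have hexact := lTensor_exact (TwBase ψ) (LinearMap.exact_map_mkQ_range j)
    (Submodule.mkQ_surjective (LinearMap.range j))
  obtain ⟨z, hz⟩ := (hexact _).mp h0
  -- coordinates
  set w : Fin a → 𝔖 := twPi ψ a y with hwdef
  set vz : Fin a → 𝔖 := twPi ψ a z with hvzdef
  have hEw : ∀ i, (E : 𝔖) * w i = j' vz i := by
    intro i
    have h3 : twistMap ψ j z = twistSMul ψ (E : 𝔖) _ y := hz
    have h2 : (fun i => (E : 𝔖) * w i)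
        = fun i => ∑ l, ψ (j (Pi.single l 1) i) * vz l := by
      rw [hwdef, hvzdef]
      calc (fun i => (E : 𝔖) * twPi ψ a y i)
          = twPi ψ a (twistSMul ψ (E : 𝔖) _ y) := (twPi_twistSMul ψ _ y).symm
        _ = twPi ψ a (twistMap ψ j z) := by rw [h3]
        _ = fun i => ∑ l, ψ (j (Pi.single l 1) i) * twPi ψ a z l := twPi_twistMap ψ j z
    rw [congrFun h2 i, hj'app]
    exact Finset.sum_congr rfl fun l _ => rfl
  obtain ⟨v₀, hv₀⟩ := hrange' w
  have hEz : ∀ l, (p : 𝔖) ^ N * vz l = (E : 𝔖) * v₀ l := by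
    have h1 : j' ((p : 𝔖) ^ N • vz) = j' ((E : 𝔖) • v₀) := by
      rw [map_smul, map_smul, hv₀]
      funext i
      show (p : 𝔖) ^ N * j' vz i = (E : 𝔖) * ((p : 𝔖) ^ N • w) i
      rw [← hEw i]
      show (p : 𝔖) ^ N * ((E : 𝔖) * w i) = (E : 𝔖) * ((p : 𝔖) ^ N * w i)
      ring
    have h2 := hj'inj h1
    intro l
    exact congrFun h2 l
  have hEdvd : ∀ l, ∃ y', vz l = (E : 𝔖) * y' := fun l =>
    eis_cancel E e hE hdeg hco N (vz l) (v₀ l) (hEz l)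
  choose y' hy' using hEdvd
  have hwj' : w = j' y' := by
    have h1 : ∀ i, (E : 𝔖) * w i = (E : 𝔖) * j' y' i := by
      intro i
      rw [hEw i, hj'app, hj'app, Finset.mul_sum]
      exact Finset.sum_congr rfl fun l _ => by rw [hy' l]; ring
    funext i
    exact mul_left_cancel₀ hEne (h1 i)
  have hytw : twistMap ψ j (twPiInv ψ a y') = y := by
    apply twPi_injective ψ
    rw [twPi_twistMap]
    funext i
    rw [twPi_rightInv]
    have h1 : ∑ l, ψ (j (Pi.single l 1) i) * y' l = j' y' i := by
      rw [hj'app]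
      rfl
    rw [h1, ← hwj']
  have hy2 : twistMap ψ (LinearMap.range j).mkQ y = x := hy
  have hxz : x = twistMap ψ (LinearMap.range j).mkQ (twistMap ψ j (twPiInv ψ a y')) := by
    rw [hytw, hy2]
  rw [hxz]
  have hcomp : (LinearMap.range j).mkQ.comp j = 0 := by
    refine LinearMap.ext fun v => ?_
    simp only [LinearMap.comp_apply, Submodule.mkQ_apply, LinearMap.zero_apply,
      Submodule.Quotient.mk_eq_zero]
    exact ⟨v, rfl⟩
  show (LinearMap.lTensor (TwBase ψ) (LinearMap.range j).mkQ)
      ((LinearMap.lTensor (TwBase ψ) j) (twPiInv ψ a y')) = 0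
  erw [← LinearMap.lTensor_comp_apply, hcomp, LinearMap.lTensor_zero]
  rfl
end
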